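/- Let f : ℝ^{k(n+m)} → ℝ^{n×m} be the map sending ((x_{h,i}), (y_{h,j})) to the matrix Σ_{h=1}^k x_h·(y_h)ᵀ, where x_h = (x_{h,1},…,x_{h,n}) and y_h = (y_{h,1},…,y_{h,m}). If p is a point such that the vectors x₁,…,x_k ∈ ℝⁿ are linearly independent and the vectors y₁,…,y_k ∈ ℝᵐ are linearly independent, then the Jacobian (differential) of f at p has rank k(n+m−k). -/

import Mathlib

open Matrix BigOperators Filter Topology

/-- The nonnegative rank: least `k` such that `P` is a sum of `k` nonnegative dyads. -/
noncomputable def nnRank {n m : ℕ} (P : Matrix (Fin n) (Fin m) ℝ) : ℕ :=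
  sInf {k : ℕ | ∃ (c : Fin k → Fin n → ℝ) (r : Fin k → Fin m → ℝ),
    (∀ h i, 0 ≤ c h i) ∧ (∀ h j, 0 ≤ r h j) ∧
    P = ∑ h, Matrix.vecMulVec (c h) (r h)}

/-- Frobenius distance between two matrices. -/
noncomputable def frobDist {n m : ℕ} (P N : Matrix (Fin n) (Fin m) ℝ) : ℝ :=
  Real.sqrt (∑ i, ∑ j, (P i j - N i j) ^ 2)

theorem jacobian_full_rank {n m k : ℕ} (hkn : k ≤ n) (hkm : k ≤ m)
    (p : (Fin k → (Fin n → ℝ)) × (Fin k → (Fin m → ℝ)))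
    (hx : LinearIndependent ℝ p.1) (hy : LinearIndependent ℝ p.2) :
    Module.finrank ℝ
      (LinearMap.range
        ((fderiv ℝ
          (fun q : (Fin k → (Fin n → ℝ)) × (Fin k → (Fin m → ℝ)) =>
            fun i j => ∑ h, q.1 h i * q.2 h j) p)).toLinearMap) =
      k * (n + m - k) := by
  classical
  -- coordinate projections as continuous linear maps
  let P1 : Fin k → Fin n → ((Fin k → (Fin n → ℝ)) × (Fin k → (Fin m → ℝ)) →L[ℝ] ℝ) :=
    fun h i => (ContinuousLinearMap.proj (R := ℝ) (φ := fun _ : Fin n => ℝ) i).comp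
      ((ContinuousLinearMap.proj (R := ℝ) (φ := fun _ : Fin k => Fin n → ℝ) h).comp
        (ContinuousLinearMap.fst ℝ (Fin k → Fin n → ℝ) (Fin k → Fin m → ℝ)))
  let P2 : Fin k → Fin m → ((Fin k → (Fin n → ℝ)) × (Fin k → (Fin m → ℝ)) →L[ℝ] ℝ) :=
    fun h j => (ContinuousLinearMap.proj (R := ℝ) (φ := fun _ : Fin m => ℝ) j).comp
      ((ContinuousLinearMap.proj (R := ℝ) (φ := fun _ : Fin k => Fin m → ℝ) h).comp
        (ContinuousLinearMap.snd ℝ (Fin k → Fin n → ℝ) (Fin k → Fin m → ℝ)))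
  let D : (Fin k → (Fin n → ℝ)) × (Fin k → (Fin m → ℝ)) →L[ℝ] (Fin n → Fin m → ℝ) :=
    ContinuousLinearMap.pi fun i => ContinuousLinearMap.pi fun j =>
      ∑ h, (p.1 h i • P2 h j + p.2 h j • P1 h i)
  have hD : HasFDerivAt (fun q : (Fin k → (Fin n → ℝ)) × (Fin k → (Fin m → ℝ)) =>
      fun i j => ∑ h, q.1 h i * q.2 h j) D p := by
    apply hasFDerivAt_pi.2
    intro i
    apply hasFDerivAt_pi.2
    intro j
    exact HasFDerivAt.fun_sum fun h _ =>
      ((P1 h i).hasFDerivAt (x := p)).mul ((P2 h j).hasFDerivAt (x := p))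
  rw [hD.fderiv]
  have hDapp : ∀ q : (Fin k → (Fin n → ℝ)) × (Fin k → (Fin m → ℝ)), ∀ i j,
      D q i j = ∑ h, (p.1 h i * q.2 h j + q.1 h i * p.2 h j) := by
    intro q i j
    simp [D, P1, P2, ContinuousLinearMap.pi_apply, ContinuousLinearMap.sum_apply,
      smul_eq_mul, mul_comm]
  -- the injective parametrization of the kernel
  let Φ : (Fin k → Fin k → ℝ) →ₗ[ℝ] (Fin k → (Fin n → ℝ)) × (Fin k → (Fin m → ℝ)) :=
    { toFun := fun A => (fun h i => ∑ g, A h g * p.1 g i, fun h j => -∑ g, A g h * p.2 g j)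
      map_add' := by
        intro A B
        refine Prod.ext ?_ ?_ <;> funext h i <;>
          simp [add_mul, Finset.sum_add_distrib, neg_add, add_comm]
      map_smul' := by
        intro c A
        refine Prod.ext ?_ ?_ <;> funext h i <;>
          simp [Finset.mul_sum, mul_assoc] }
  have hΦinj : Function.Injective Φ := by
    intro A B hAB
    have h1 : ∀ h i, ∑ g, A h g * p.1 g i = ∑ g, B h g * p.1 g i := by
      intro h i
      have := congrArg (fun z => z.1 h i) hAB
      simpa [Φ] using this
    funext h g
    have h2 : ∑ g', (A h g' - B h g') • p.1 g' = 0 := by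
      funext i
      simp only [Finset.sum_apply, Pi.smul_apply, smul_eq_mul, sub_mul, Pi.zero_apply,
        Finset.sum_sub_distrib]
      rw [h1 h i, sub_self]
    have := Fintype.linearIndependent_iff.1 hx (fun g' => A h g' - B h g') h2 g
    linarith [this]
  have hker : LinearMap.ker D.toLinearMap = LinearMap.range Φ := by
    ext q
    constructor
    · intro hq
      have H : ∀ i j, ∑ h, (p.1 h i * q.2 h j + q.1 h i * p.2 h j) = 0 := by
        intro i j
        have h0 := congrFun (congrFun (LinearMap.mem_ker.1 hq) i) j
        rw [← hDapp q i j]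
        exact h0
      -- left inverse of c ↦ ∑ h, c h • p.2 h
      let T : (Fin k → ℝ) →ₗ[ℝ] (Fin m → ℝ) :=
        { toFun := fun c => ∑ h, c h • p.2 h
          map_add' := by intro a b; simp [add_smul, Finset.sum_add_distrib]
          map_smul' := by intro c a; simp [smul_smul, Finset.smul_sum] }
      have hTinj : LinearMap.ker T = ⊥ := by
        rw [LinearMap.ker_eq_bot']
        intro c hc
        funext h
        exact Fintype.linearIndependent_iff.1 hy c hc h
      obtain ⟨G, hG⟩ := T.exists_leftInverse_of_injective hTinj
      let A : Fin k → Fin k → ℝ := fun l h => -(G (q.2 h)) l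
      have hu : ∀ l i, q.1 l i = ∑ g, A l g * p.1 g i := by
        intro l i
        have key : T (fun h => q.1 h i) = -∑ h, p.1 h i • q.2 h := by
          funext j
          have h5 : ∑ h, q.1 h i * p.2 h j = -∑ h, p.1 h i * q.2 h j := by
            have h6 := H i j
            rw [Finset.sum_add_distrib] at h6
            linarith
          simpa [T, Finset.sum_apply] using h5
        have h7 := congrArg G key
        rw [← LinearMap.comp_apply, hG] at h7
        have h8 := congrFun h7 l
        simp only [LinearMap.id_apply, map_neg, map_sum, _root_.map_smul, Pi.neg_apply,
          Finset.sum_apply, Pi.smul_apply, smul_eq_mul] at h8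
        rw [h8]
        rw [← Finset.sum_neg_distrib]
        exact Finset.sum_congr rfl fun g _ => by simp [A]; ring
      have hv : ∀ g j, q.2 g j = -∑ h, A h g * p.2 h j := by
        intro g j
        have h3 : ∀ i, ∑ g', (q.2 g' j + ∑ h, A h g' * p.2 h j) * p.1 g' i = 0 := by
          intro i
          have hH := H i j
          have hswap : ∑ h, q.1 h i * p.2 h j
              = ∑ g', (∑ h, A h g' * p.2 h j) * p.1 g' i := by
            calc ∑ h, q.1 h i * p.2 h j
                = ∑ h, (∑ g', A h g' * p.1 g' i) * p.2 h j :=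
                  Finset.sum_congr rfl fun h _ => by rw [hu h i]
              _ = ∑ h, ∑ g', A h g' * p.1 g' i * p.2 h j := by
                  simp [Finset.sum_mul]
              _ = ∑ g', ∑ h, A h g' * p.1 g' i * p.2 h j := Finset.sum_comm
              _ = ∑ g', (∑ h, A h g' * p.2 h j) * p.1 g' i := by
                  refine Finset.sum_congr rfl fun g' _ => ?_
                  rw [Finset.sum_mul]
                  exact Finset.sum_congr rfl fun h _ => by ring
          calc ∑ g', (q.2 g' j + ∑ h, A h g' * p.2 h j) * p.1 g' i
              = ∑ g', (p.1 g' i * q.2 g' j)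
                + ∑ g', (∑ h, A h g' * p.2 h j) * p.1 g' i := by
                rw [← Finset.sum_add_distrib]
                exact Finset.sum_congr rfl fun g' _ => by ring
            _ = ∑ h, (p.1 h i * q.2 h j) + ∑ h, q.1 h i * p.2 h j := by rw [hswap]
            _ = 0 := by rw [← Finset.sum_add_distrib]; exact hH
        have hc : ∀ g', q.2 g' j + ∑ h, A h g' * p.2 h j = 0 := by
          intro g'
          refine Fintype.linearIndependent_iff.1 hx
            (fun g'' => q.2 g'' j + ∑ h, A h g'' * p.2 h j) ?_ g'
          funext i
          simpa [smul_eq_mul] using h3 i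
        linarith [hc g]
      refine ⟨A, ?_⟩
      refine Prod.ext ?_ ?_
      · funext h i
        simp only [Φ, LinearMap.coe_mk, AddHom.coe_mk]
        exact (hu h i).symm
      · funext h j
        simp only [Φ, LinearMap.coe_mk, AddHom.coe_mk]
        exact (hv h j).symm
    · rintro ⟨A, rfl⟩
      rw [LinearMap.mem_ker]
      funext i j
      rw [ContinuousLinearMap.coe_coe, hDapp]
      simp only [Φ, LinearMap.coe_mk, AddHom.coe_mk, Pi.zero_apply]
      simp only [mul_neg, Finset.mul_sum, Finset.sum_mul]
      rw [Finset.sum_add_distrib, Finset.sum_neg_distrib, neg_add_eq_zero]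
      rw [Finset.sum_comm]
      exact Finset.sum_congr rfl fun h _ => Finset.sum_congr rfl fun g _ => by ring
  -- rank-nullity
  have hkerrank : Module.finrank ℝ (LinearMap.ker D.toLinearMap) = k * k := by
    rw [hker, LinearMap.finrank_range_of_inj hΦinj]
    simp [Module.finrank_pi_fintype, Module.finrank_fintype_fun_eq_card]
  have hrn := LinearMap.finrank_range_add_finrank_ker D.toLinearMap
  have hdom : Module.finrank ℝ ((Fin k → (Fin n → ℝ)) × (Fin k → (Fin m → ℝ)))
      = k * n + k * m := by
    simp [Module.finrank_prod, Module.finrank_pi_fintype,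
      Module.finrank_fintype_fun_eq_card]
  rw [hdom, hkerrank] at hrn
  have harith : k * (n + m - k) + k * k = k * n + k * m := by
    rw [← Nat.mul_add, Nat.sub_add_cancel (le_trans hkm (Nat.le_add_left m n)), Nat.mul_add]
  exact Nat.add_right_cancel (hrn.trans harith.symm)
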